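/- Let A and M be real N×N matrices with M invertible, and suppose M + Mᵀ − A is invertible. Define M̄ := M (M + Mᵀ − A)⁻¹ Mᵀ. Then M̄ is invertible, M̄⁻¹ = M⁻¹ + M⁻ᵀ − M⁻ᵀ A M⁻¹, and I − M̄⁻¹ A = (I − M⁻ᵀ A)(I − M⁻¹ A). -/

import Mathlib

open Matrix

theorem amli_symmetrization_identity (N : ℕ) (A M : Matrix (Fin N) (Fin N) ℝ)
    (hM : IsUnit M.det) (hS : IsUnit (M + Mᵀ - A).det)
    (Mbar : Matrix (Fin N) (Fin N) ℝ) (hMbar : Mbar = M * (M + Mᵀ - A)⁻¹ * Mᵀ) :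
    IsUnit Mbar.det ∧
    Mbar⁻¹ = M⁻¹ + Mᵀ⁻¹ - Mᵀ⁻¹ * A * M⁻¹ ∧
    1 - Mbar⁻¹ * A = (1 - Mᵀ⁻¹ * A) * (1 - M⁻¹ * A) := by
  have hMT : IsUnit Mᵀ.det := by rwa [Matrix.det_transpose]
  have hSi : IsUnit (M + Mᵀ - A)⁻¹.det := by
    rw [Matrix.det_nonsing_inv]
    exact hS.ringInverse
  have hU : IsUnit Mbar.det := by
    rw [hMbar, Matrix.det_mul, Matrix.det_mul]
    exact (hM.mul hSi).mul hMT
  have hinv : Mbar⁻¹ = M⁻¹ + Mᵀ⁻¹ - Mᵀ⁻¹ * A * M⁻¹ := by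
    rw [hMbar, Matrix.mul_inv_rev, Matrix.mul_inv_rev,
      Matrix.nonsing_inv_nonsing_inv _ hS]
    rw [Matrix.sub_mul, Matrix.add_mul, Matrix.mul_sub, Matrix.mul_add,
      Matrix.mul_nonsing_inv _ hM, Matrix.mul_one,
      ← Matrix.mul_assoc Mᵀ⁻¹ Mᵀ M⁻¹, Matrix.nonsing_inv_mul _ hMT,
      Matrix.one_mul, ← Matrix.mul_assoc]
    abel
  refine ⟨hU, hinv, ?_⟩
  rw [hinv]
  noncomm_ring
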